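/- Let (U,V,Z,W) be random variables on finite sets such that (Z,V)−U−W is a Markov chain, and let c ≥ 0 satisfy I(U;W|Z) > c. Then there exists a finite random variable W̄, jointly distributed with (U,V,Z), such that (Z,V)−U−W̄ is a Markov chain, I(U;W̄|Z) = c, and H(V|W̄,Z) ≤ H(V|W,Z) + I(U;W|Z) − c. -/

import Mathlib

open Filter Real

noncomputable section

namespace DHT

/-- Real-valued indicator of a proposition. -/
def ind (P : Prop) : ℝ := by classical exact if P then 1 else 0

/-- `p` is a probability mass function on the finite type `α`. -/
def IsPMF {α : Type*} [Fintype α] (p : α → ℝ) : Prop :=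
  (∀ a, 0 ≤ p a) ∧ ∑ a, p a = 1

/-- `f` is a stochastic kernel: every row is a pmf. -/
def IsKernel {α β : Type*} [Fintype β] (f : α → β → ℝ) : Prop :=
  ∀ a, (∀ b, 0 ≤ f a b) ∧ ∑ b, f a b = 1

/-- Pushforward of a pmf along a map. -/
def pushf {α β : Type*} [Fintype α] (p : α → ℝ) (f : α → β) : β → ℝ :=
  fun b => ∑ a, ind (f a = b) * p a

/-- Probability of a set under a pmf. -/
def probIn {α : Type*} [Fintype α] (p : α → ℝ) (A : Set α) : ℝ :=
  ∑ a, ind (a ∈ A) * p a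

/-- Shannon entropy, in bits. -/
def entropy {α : Type*} [Fintype α] (p : α → ℝ) : ℝ :=
  -∑ a, p a * Real.logb 2 (p a)

/-- Kullback–Leibler divergence, in bits. -/
def klDiv {α : Type*} [Fintype α] (p q : α → ℝ) : ℝ :=
  ∑ a, p a * Real.logb 2 (p a / q a)

/-- Conditional entropy `H(α | β)` of a joint pmf on `α × β`, in bits. -/
def condEntropy {α β : Type*} [Fintype α] [Fintype β] (p : α × β → ℝ) : ℝ :=
  -∑ x : α × β, p x * Real.logb 2 (p x / ∑ a, p (a, x.2))

/-- Mutual information `I(α;β)`, in bits. -/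
def mutualInfo {α β : Type*} [Fintype α] [Fintype β] (p : α × β → ℝ) : ℝ :=
  ∑ x : α × β, p x * Real.logb 2 (p x / ((∑ b, p (x.1, b)) * (∑ a, p (a, x.2))))

/-- Conditional mutual information `I(α;β|γ)`, in bits. -/
def condMI {α β γ : Type*} [Fintype α] [Fintype β] [Fintype γ] (p : α × β × γ → ℝ) : ℝ :=
  ∑ x : α × β × γ, p x * Real.logb 2
    (p x * (∑ a, ∑ b, p (a, b, x.2.2)) /
      ((∑ b, p (x.1, b, x.2.2)) * (∑ a, p (a, x.2.1, x.2.2))))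

/-- Markov chain `α − β − γ`: the first and third components are conditionally
independent given the middle one. -/
def MarkovChain {α β γ : Type*} [Fintype α] [Fintype γ] (p : α × β × γ → ℝ) : Prop :=
  ∀ a b c, p (a, b, c) * (∑ a', ∑ c', p (a', b, c')) =
    (∑ c', p (a, b, c')) * (∑ a', p (a', b, c))

/-- Shannon capacity of a discrete memoryless channel, in bits per use. -/
def capacity {X Y : Type*} [Fintype X] [Fintype Y] (Ch : X → Y → ℝ) : ℝ :=
  sSup {c | ∃ q : X → ℝ, IsPMF q ∧ c = mutualInfo (fun xy : X × Y => q xy.1 * Ch xy.1 xy.2)}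

/-- Empirical distribution (type) of a length-`j` sequence. -/
def empDist {α : Type*} [Fintype α] {j : ℕ} (w : Fin j → α) : α → ℝ :=
  fun a => (∑ i, ind (w i = a)) / j

/-- δ-typicality: the empirical distribution is within δ of `p` in every coordinate. -/
def IsTypical {α : Type*} [Fintype α] (p : α → ℝ) (δ : ℝ) {j : ℕ} (w : Fin j → α) : Prop :=
  ∀ a, |empDist w a - p a| ≤ δ

section System

variable {L : ℕ} {U X Y : Fin L → Type} {V Z : Type}
variable [∀ l, Fintype (U l)] [∀ l, Fintype (X l)] [∀ l, Fintype (Y l)]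
variable [Fintype V] [Fintype Z]

/-- Joint pmf of the channel outputs `(Y₁ⁿ,…,Y_Lⁿ)`, `V^k` and `Z^k` induced by `k` i.i.d.
copies of the source `R`, the stochastic encoders `f` and the memoryless channels `Ch`. -/
def inducedDist (R : (((l : Fin L) → U l) × V × Z) → ℝ)
    (Ch : (l : Fin L) → X l → Y l → ℝ) (k n : ℕ)
    (f : (l : Fin L) → (Fin k → U l) → (Fin n → X l) → ℝ) :
    (((l : Fin L) → Fin n → Y l) × (Fin k → V) × (Fin k → Z)) → ℝ :=
  fun yvz =>
    ∑ u : (l : Fin L) → Fin k → U l, ∑ x : (l : Fin L) → Fin n → X l,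
      (∏ i : Fin k, R ((fun l => u l i), yvz.2.1 i, yvz.2.2 i)) *
        ((∏ l, f l (u l) (x l)) * ∏ l, ∏ j : Fin n, Ch l (x l j) (yvz.1 l j))

/-- `P` and `Q` have the same single-variable marginals. -/
def SameMarginals (P Q : (((l : Fin L) → U l) × V × Z) → ℝ) : Prop :=
  (∀ (l : Fin L) (a : U l),
      (∑ x : ((l : Fin L) → U l) × V × Z, ind (x.1 l = a) * P x) =
        ∑ x : ((l : Fin L) → U l) × V × Z, ind (x.1 l = a) * Q x) ∧
  (∀ v : V, (∑ x : ((l : Fin L) → U l) × V × Z, ind (x.2.1 = v) * P x) =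
      ∑ x : ((l : Fin L) → U l) × V × Z, ind (x.2.1 = v) * Q x) ∧
  (∀ z : Z, (∑ x : ((l : Fin L) → U l) × V × Z, ind (x.2.2 = z) * P x) =
      ∑ x : ((l : Fin L) → U l) × V × Z, ind (x.2.2 = z) * Q x)

/-- Testing against conditional independence: `Q = P_{U_𝓛|Z} P_{V|Z} P_Z`. -/
def IsTACI (P Q : (((l : Fin L) → U l) × V × Z) → ℝ) : Prop :=
  ∀ x : ((l : Fin L) → U l) × V × Z,
    Q x = (∑ v : V, P (x.1, v, x.2.2)) * (∑ u : (l : Fin L) → U l, P (u, x.2.1, x.2.2)) /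
      (∑ u : (l : Fin L) → U l, ∑ v : V, P (u, v, x.2.2))

/-- Optimal type-2 error probability `β(k,τ,ε)`. -/
def beta (P Q : (((l : Fin L) → U l) × V × Z) → ℝ)
    (Ch : (l : Fin L) → X l → Y l → ℝ) (τ ε : ℝ) (k : ℕ) : ℝ :=
  sInf {b | ∃ n : ℕ, (n : ℝ) ≤ τ * k ∧
    ∃ f : (l : Fin L) → (Fin k → U l) → (Fin n → X l) → ℝ,
      (∀ l, IsKernel (f l)) ∧
      ∃ A : Set (((l : Fin L) → Fin n → Y l) × (Fin k → V) × (Fin k → Z)),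
        probIn (inducedDist P Ch k n f) Aᶜ ≤ ε ∧
        b = probIn (inducedDist Q Ch k n f) A}

/-- `θ(k,τ)`. -/
def thetaK (P Q : (((l : Fin L) → U l) × V × Z) → ℝ)
    (Ch : (l : Fin L) → X l → Y l → ℝ) (τ : ℝ) (k : ℕ) : ℝ :=
  sSup {d | ∃ n : ℕ, (n : ℝ) ≤ τ * k ∧
    ∃ f : (l : Fin L) → (Fin k → U l) → (Fin n → X l) → ℝ,
      (∀ l, IsKernel (f l)) ∧
      d = klDiv (inducedDist P Ch k n f) (inducedDist Q Ch k n f) / k}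

/-- `θ(τ) = sup_{k ≥ 1} θ(k,τ)`. -/
def theta (P Q : (((l : Fin L) → U l) × V × Z) → ℝ)
    (Ch : (l : Fin L) → X l → Y l → ℝ) (τ : ℝ) : ℝ :=
  sSup {d | ∃ k : ℕ, 1 ≤ k ∧ d = thetaK P Q Ch τ k}

/-- Optimal type-2 error exponent `κ(τ,ε)`. -/
def kappa (P Q : (((l : Fin L) → U l) × V × Z) → ℝ)
    (Ch : (l : Fin L) → X l → Y l → ℝ) (τ ε : ℝ) : ℝ :=
  sSup {κ : ℝ | 0 ≤ κ ∧ ∀ δ : ℝ, 0 < δ →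
    Filter.limsup (fun k : ℕ => Real.logb 2 (beta P Q Ch τ ε k) / k) Filter.atTop ≤ -(κ - δ)}

/-- `I(V^k; Y₁ⁿ,…,Y_Lⁿ | Z^k)` of the induced distribution. -/
def miVY (P : (((l : Fin L) → U l) × V × Z) → ℝ)
    (Ch : (l : Fin L) → X l → Y l → ℝ) (k n : ℕ)
    (f : (l : Fin L) → (Fin k → U l) → (Fin n → X l) → ℝ) : ℝ :=
  condMI (fun x : (Fin k → V) × ((l : Fin L) → Fin n → Y l) × (Fin k → Z) =>
    inducedDist P Ch k n f (x.2.1, x.1, x.2.2))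

/-- `H(V^k | Y₁ⁿ,…,Y_Lⁿ, Z^k)` of the induced distribution. -/
def condEntV (P : (((l : Fin L) → U l) × V × Z) → ℝ)
    (Ch : (l : Fin L) → X l → Y l → ℝ) (k n : ℕ)
    (f : (l : Fin L) → (Fin k → U l) → (Fin n → X l) → ℝ) : ℝ :=
  condEntropy (fun x : (Fin k → V) × (((l : Fin L) → Fin n → Y l) × (Fin k → Z)) =>
    inducedDist P Ch k n f (x.2.1, x.1, x.2.2))

/-- Probability of correct decoding in the `L`-helper JSCC problem. -/
def probCorrect (P : (((l : Fin L) → U l) × V × Z) → ℝ)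
    (Ch : (l : Fin L) → X l → Y l → ℝ) (k n m : ℕ)
    (f : (l : Fin L) → (Fin k → U l) → (Fin n → X l) → ℝ)
    (φ : (Fin k → V) → Fin m)
    (g : Fin m × ((l : Fin L) → Fin n → Y l) × (Fin k → Z) → (Fin k → V)) : ℝ :=
  ∑ w : ((l : Fin L) → Fin n → Y l) × (Fin k → V) × (Fin k → Z),
    ind (g (φ w.2.1, w.1, w.2.2) = w.2.1) * inducedDist P Ch k n f w

/-- Achievability of rate `R` in the `L`-helper JSCC problem with bandwidth ratio `τ`. -/
def JSCCAchievable (P : (((l : Fin L) → U l) × V × Z) → ℝ)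
    (Ch : (l : Fin L) → X l → Y l → ℝ) (τ R : ℝ) : Prop :=
  ∀ lam : ℝ, 0 < lam → lam ≤ 1 →
    ∃ (nseq mseq : ℕ → ℕ) (δ : ℕ → ℝ)
      (f : (k : ℕ) → (l : Fin L) → (Fin k → U l) → (Fin (nseq k) → X l) → ℝ)
      (φ : (k : ℕ) → (Fin k → V) → Fin (mseq k))
      (g : (k : ℕ) → Fin (mseq k) × ((l : Fin L) → Fin (nseq k) → Y l) × (Fin k → Z) →
        (Fin k → V)),
      (∀ k, 0 ≤ δ k) ∧ Filter.Tendsto δ Filter.atTop (nhds 0) ∧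
      ∀ k : ℕ, 1 ≤ k →
        (nseq k : ℝ) ≤ τ * k ∧ 1 ≤ mseq k ∧ (∀ l, IsKernel (f k l)) ∧
        1 - lam ≤ probCorrect P Ch k (nseq k) (mseq k) (f k) (φ k) (g k) ∧
        Real.logb 2 (mseq k) / k ≤ R + δ k

/-- Optimal rate `R(τ)` of the `L`-helper JSCC problem. -/
def Rjscc (P : (((l : Fin L) → U l) × V × Z) → ℝ)
    (Ch : (l : Fin L) → X l → Y l → ℝ) (τ : ℝ) : ℝ :=
  sInf {R | JSCCAchievable P Ch τ R}

/-- `R_k`: infimum of `H(V^k|Y^n,Z^k)/k` over block lengths `n ≤ τk` and encoders. -/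
def Rk (P : (((l : Fin L) → U l) × V × Z) → ℝ)
    (Ch : (l : Fin L) → X l → Y l → ℝ) (τ : ℝ) (k : ℕ) : ℝ :=
  sInf {r | ∃ n : ℕ, (n : ℝ) ≤ τ * k ∧
    ∃ f : (l : Fin L) → (Fin k → U l) → (Fin n → X l) → ℝ,
      (∀ l, IsKernel (f l)) ∧ r = condEntV P Ch k n f / k}

end System

section SingleObserver

variable {Uu Xx Yy V Z : Type}
variable [Fintype Uu] [Fintype Xx] [Fintype Yy] [Fintype V] [Fintype Z]

/-- Single-observer induced joint pmf of `(Yⁿ, V^k, Z^k)`. -/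
def inducedDist1 (R : Uu × V × Z → ℝ) (Ch : Xx → Yy → ℝ) (k n : ℕ)
    (f : (Fin k → Uu) → (Fin n → Xx) → ℝ) :
    ((Fin n → Yy) × (Fin k → V) × (Fin k → Z)) → ℝ :=
  fun yvz => ∑ u : Fin k → Uu, ∑ x : Fin n → Xx,
    (∏ i : Fin k, R (u i, yvz.2.1 i, yvz.2.2 i)) *
      (f u x * ∏ j : Fin n, Ch (x j) (yvz.1 j))

end SingleObserver

section Aux

variable {Uu V Z Wt : Type} [Fintype Uu] [Fintype V] [Fintype Z] [Fintype Wt]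

/-- Markov chain `(Z,V) − U − W` for a joint pmf on `(U × V × Z) × W`. -/
def MarkovZVUW (J : (Uu × V × Z) × Wt → ℝ) : Prop :=
  MarkovChain (fun x : (Z × V) × Uu × Wt => J ((x.2.1, x.1.2, x.1.1), x.2.2))

/-- `I(U;W|Z)` for a joint pmf on `(U × V × Z) × W`. -/
def miUW_Z (J : (Uu × V × Z) × Wt → ℝ) : ℝ :=
  condMI (fun x : Uu × Wt × Z => ∑ v, J ((x.1, v, x.2.2), x.2.1))

/-- `I(V;W|Z)` for a joint pmf on `(U × V × Z) × W`. -/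
def miVW_Z (J : (Uu × V × Z) × Wt → ℝ) : ℝ :=
  condMI (fun x : V × Wt × Z => ∑ u, J ((u, x.1, x.2.2), x.2.1))

/-- `I(U;W|V,Z)` for a joint pmf on `(U × V × Z) × W`. -/
def miUW_VZ (J : (Uu × V × Z) × Wt → ℝ) : ℝ :=
  condMI (fun x : Uu × Wt × (V × Z) => J ((x.1, x.2.2.1, x.2.2.2), x.2.1))

/-- `H(V|W,Z)` for a joint pmf on `(U × V × Z) × W`. -/
def entV_WZ (J : (Uu × V × Z) × Wt → ℝ) : ℝ :=
  condEntropy (fun x : V × (Wt × Z) => ∑ u, J ((u, x.1, x.2.2), x.2.1))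

/-- `H(V|Z)` for a joint pmf on `U × V × Z`. -/
def entV_Z (P : Uu × V × Z → ℝ) : ℝ :=
  condEntropy (fun x : V × Z => ∑ u, P (u, x.1, x.2))

end Aux

end DHT

open DHT Filter Real

namespace S15
set_option linter.unusedSectionVars false
open DHT Real

/-- Gibbs' inequality / nonnegativity of KL divergence. -/
lemma gibbs {ι : Type*} [Fintype ι] (p q : ι → ℝ) (hp : ∀ i, 0 ≤ p i) (hq : ∀ i, 0 ≤ q i)
    (hsum : ∑ i, q i ≤ ∑ i, p i) (hsupp : ∀ i, p i ≠ 0 → q i ≠ 0) :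
    0 ≤ ∑ i, p i * Real.logb 2 (p i / q i) := by
  have key : ∀ i, p i * Real.log (q i / p i) ≤ q i - p i := by
    intro i
    rcases eq_or_lt_of_le (hp i) with h0 | h0
    · rw [← h0]; simpa using hq i
    · have hqi : 0 < q i := lt_of_le_of_ne (hq i) (Ne.symm (hsupp i (ne_of_gt h0)))
      have hlog := Real.log_le_sub_one_of_pos (div_pos hqi h0)
      have := mul_le_mul_of_nonneg_left hlog (le_of_lt h0)
      calc p i * Real.log (q i / p i) ≤ p i * (q i / p i - 1) := this
        _ = q i - p i := by field_simp
  have hsum2 : ∑ i, p i * Real.log (q i / p i) ≤ 0 := by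
    calc ∑ i, p i * Real.log (q i / p i) ≤ ∑ i, (q i - p i) := Finset.sum_le_sum (fun i _ => key i)
      _ = ∑ i, q i - ∑ i, p i := Finset.sum_sub_distrib _ _
      _ ≤ 0 := by linarith
  have hrw : ∀ i, p i * Real.logb 2 (p i / q i) = -(p i * Real.log (q i / p i)) / Real.log 2 := by
    intro i
    have : Real.log (p i / q i) = - Real.log (q i / p i) := by
      rw [← Real.log_inv, inv_div]
    rw [Real.logb, this]; ring
  rw [Finset.sum_congr rfl (fun i _ => hrw i)]
  rw [← Finset.sum_div, Finset.sum_neg_distrib]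
  have h2 : 0 < Real.log 2 := Real.log_pos (by norm_num)
  have h3 : (0:ℝ) ≤ -∑ i, p i * Real.log (q i / p i) := by linarith
  exact div_nonneg h3 (le_of_lt h2)

variable {Uu V Z Wt : Type} [Fintype Uu] [Fintype V] [Fintype Z] [Fintype Wt]

def pUWZ (J : (Uu × V × Z) × Wt → ℝ) (u : Uu) (w : Wt) (z : Z) : ℝ := ∑ v, J ((u,v,z),w)
def pUVZ (J : (Uu × V × Z) × Wt → ℝ) (u : Uu) (v : V) (z : Z) : ℝ := ∑ w, J ((u,v,z),w)
def pVWZ (J : (Uu × V × Z) × Wt → ℝ) (v : V) (w : Wt) (z : Z) : ℝ := ∑ u, J ((u,v,z),w)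
def pUZ (J : (Uu × V × Z) × Wt → ℝ) (u : Uu) (z : Z) : ℝ := ∑ w, ∑ v, J ((u,v,z),w)
def pWZ (J : (Uu × V × Z) × Wt → ℝ) (w : Wt) (z : Z) : ℝ := ∑ u, ∑ v, J ((u,v,z),w)
def pVZ (J : (Uu × V × Z) × Wt → ℝ) (v : V) (z : Z) : ℝ := ∑ u, ∑ w, J ((u,v,z),w)
def pZ (J : (Uu × V × Z) × Wt → ℝ) (z : Z) : ℝ := ∑ u, ∑ w, ∑ v, J ((u,v,z),w)
def pU (J : (Uu × V × Z) × Wt → ℝ) (u : Uu) : ℝ := ∑ z, ∑ v, ∑ w, J ((u,v,z),w)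
def pUW (J : (Uu × V × Z) × Wt → ℝ) (u : Uu) (w : Wt) : ℝ := ∑ z, ∑ v, J ((u,v,z),w)

section Marg
variable (J : (Uu × V × Z) × Wt → ℝ)

lemma pUZ_eq (u z) : pUZ J u z = ∑ w, pUWZ J u w z := rfl
lemma pWZ_eq (w z) : pWZ J w z = ∑ u, pUWZ J u w z := rfl
lemma pVZ_eq (v z) : pVZ J v z = ∑ u, pUVZ J u v z := rfl
lemma pZ_eq (z) : pZ J z = ∑ u, pUZ J u z := rfl
lemma pUZ_eq' (u z) : pUZ J u z = ∑ v, pUVZ J u v z := Finset.sum_comm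
lemma pVZ_eq' (v z) : pVZ J v z = ∑ w, pVWZ J v w z := Finset.sum_comm
lemma pWZ_eq' (w z) : pWZ J w z = ∑ v, pVWZ J v w z := Finset.sum_comm
lemma pZ_eq' (z) : pZ J z = ∑ v, pVZ J v z := by
  rw [pZ]
  rw [show (∑ u, ∑ w, ∑ v, J ((u,v,z),w)) = ∑ u, ∑ v, ∑ w, J ((u,v,z),w) from
    Finset.sum_congr rfl (fun u _ => Finset.sum_comm)]
  exact Finset.sum_comm
lemma pU_eq (u) : pU J u = ∑ v, ∑ z, pUVZ J u v z := by
  rw [pU]; exact Finset.sum_comm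

lemma pWZ_comm (w z) : (∑ v, ∑ u, J ((u,v,z),w)) = pWZ J w z := Finset.sum_comm

lemma pZ_comm (z) : (∑ v : V, ∑ u, ∑ w, J ((u,v,z),w)) = pZ J z := by
  rw [pZ, Finset.sum_comm]
  exact Finset.sum_congr rfl fun u _ => Finset.sum_comm

lemma markov_ptw (hM : MarkovZVUW J) (u v z w) :
    J ((u,v,z),w) * pU J u = pUVZ J u v z * pUW J u w := by
  have := hM (z, v) u w
  simpa [Fintype.sum_prod_type, pU, pUVZ, pUW] using this

lemma markov_marg (hM : MarkovZVUW J) (u z w) :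
    pUWZ J u w z * pU J u = pUZ J u z * pUW J u w := by
  have : ∑ v, (J ((u,v,z),w) * pU J u) = ∑ v, (pUVZ J u v z * pUW J u w) :=
    Finset.sum_congr rfl (fun v _ => markov_ptw J hM u v z w)
  rw [← Finset.sum_mul, ← Finset.sum_mul] at this
  rw [pUWZ, pUZ_eq']; exact this

section Pos
variable {u : Uu} {v : V} {z : Z} {w : Wt}

lemma pUVZ_nn (hp : ∀ x, 0 ≤ J x) (u v z) : 0 ≤ pUVZ J u v z := Finset.sum_nonneg fun _ _ => hp _
lemma pUWZ_nn (hp : ∀ x, 0 ≤ J x) (u w z) : 0 ≤ pUWZ J u w z := Finset.sum_nonneg fun _ _ => hp _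
lemma pVWZ_nn (hp : ∀ x, 0 ≤ J x) (v w z) : 0 ≤ pVWZ J v w z := Finset.sum_nonneg fun _ _ => hp _
lemma pUZ_nn (hp : ∀ x, 0 ≤ J x) (u z) : 0 ≤ pUZ J u z :=
  Finset.sum_nonneg fun _ _ => Finset.sum_nonneg fun _ _ => hp _
lemma pVZ_nn (hp : ∀ x, 0 ≤ J x) (v z) : 0 ≤ pVZ J v z :=
  Finset.sum_nonneg fun _ _ => Finset.sum_nonneg fun _ _ => hp _
lemma pWZ_nn (hp : ∀ x, 0 ≤ J x) (w z) : 0 ≤ pWZ J w z :=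
  Finset.sum_nonneg fun _ _ => Finset.sum_nonneg fun _ _ => hp _
lemma pZ_nn (hp : ∀ x, 0 ≤ J x) (z) : 0 ≤ pZ J z := by
  rw [pZ_eq]; exact Finset.sum_nonneg fun _ _ => pUZ_nn J hp _ _

lemma pUVZ_pos (hp : ∀ x, 0 ≤ J x) (hx : 0 < J ((u,v,z),w)) : 0 < pUVZ J u v z :=
  lt_of_lt_of_le hx (Finset.single_le_sum (f := fun w' => J ((u,v,z),w'))
    (fun i _ => hp _) (Finset.mem_univ w))
lemma pUWZ_pos (hp : ∀ x, 0 ≤ J x) (hx : 0 < J ((u,v,z),w)) : 0 < pUWZ J u w z :=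
  lt_of_lt_of_le hx (Finset.single_le_sum (f := fun v' => J ((u,v',z),w))
    (fun i _ => hp _) (Finset.mem_univ v))
lemma pVWZ_pos (hp : ∀ x, 0 ≤ J x) (hx : 0 < J ((u,v,z),w)) : 0 < pVWZ J v w z :=
  lt_of_lt_of_le hx (Finset.single_le_sum (f := fun u' => J ((u',v,z),w))
    (fun i _ => hp _) (Finset.mem_univ u))
lemma pUZ_pos (hp : ∀ x, 0 ≤ J x) (hx : 0 < J ((u,v,z),w)) : 0 < pUZ J u z := by
  rw [pUZ_eq]
  exact lt_of_lt_of_le (pUWZ_pos J hp hx)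
    (Finset.single_le_sum (f := fun w' => pUWZ J u w' z)
      (fun i _ => pUWZ_nn J hp _ _ _) (Finset.mem_univ w))
lemma pVZ_pos (hp : ∀ x, 0 ≤ J x) (hx : 0 < J ((u,v,z),w)) : 0 < pVZ J v z := by
  rw [pVZ_eq]
  exact lt_of_lt_of_le (pUVZ_pos J hp hx)
    (Finset.single_le_sum (f := fun u' => pUVZ J u' v z)
      (fun i _ => pUVZ_nn J hp _ _ _) (Finset.mem_univ u))
lemma pWZ_pos (hp : ∀ x, 0 ≤ J x) (hx : 0 < J ((u,v,z),w)) : 0 < pWZ J w z := by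
  rw [pWZ_eq]
  exact lt_of_lt_of_le (pUWZ_pos J hp hx)
    (Finset.single_le_sum (f := fun u' => pUWZ J u' w z)
      (fun i _ => pUWZ_nn J hp _ _ _) (Finset.mem_univ u))
lemma pZ_pos (hp : ∀ x, 0 ≤ J x) (hx : 0 < J ((u,v,z),w)) : 0 < pZ J z := by
  rw [pZ_eq]
  exact lt_of_lt_of_le (pUZ_pos J hp hx)
    (Finset.single_le_sum (f := fun u' => pUZ J u' z)
      (fun i _ => pUZ_nn J hp _ _) (Finset.mem_univ u))
lemma pU_pos (hp : ∀ x, 0 ≤ J x) (hx : 0 < J ((u,v,z),w)) : 0 < pU J u := by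
  rw [pU_eq]
  have h1 : 0 < ∑ z', pUVZ J u v z' :=
    lt_of_lt_of_le (pUVZ_pos J hp hx)
      (Finset.single_le_sum (f := fun z' => pUVZ J u v z')
        (fun i _ => pUVZ_nn J hp _ _ _) (Finset.mem_univ z))
  exact lt_of_lt_of_le h1
    (Finset.single_le_sum (f := fun v' => ∑ z', pUVZ J u v' z')
      (fun i _ => Finset.sum_nonneg fun _ _ => pUVZ_nn J hp _ _ _) (Finset.mem_univ v))

lemma markov_key (hp : ∀ x, 0 ≤ J x) (hM : MarkovZVUW J) (hx : 0 < J ((u,v,z),w)) :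
    J ((u,v,z),w) * pUZ J u z = pUWZ J u w z * pUVZ J u v z := by
  have h1 := markov_ptw J hM u v z w
  have h2 := markov_marg J hM u z w
  have hU : pU J u ≠ 0 := ne_of_gt (pU_pos J hp hx)
  have h3 : (J ((u,v,z),w) * pUZ J u z - pUWZ J u w z * pUVZ J u v z) * pU J u = 0 := by
    linear_combination pUZ J u z * h1 - pUVZ J u v z * h2
  rcases mul_eq_zero.mp h3 with h | h
  · linarith
  · exact absurd h hU

end Pos

end Marg

section Rewr
variable (J : (Uu × V × Z) × Wt → ℝ)

lemma rot3' {A B C : Type} [Fintype A] [Fintype B] [Fintype C] (f : A → B → C → ℝ) :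
    ∑ a, ∑ b, ∑ c, f a b c = ∑ c, ∑ b, ∑ a, f a b c := by
  calc ∑ a, ∑ b, ∑ c, f a b c
      = ∑ a, ∑ c, ∑ b, f a b c := Finset.sum_congr rfl fun a _ => Finset.sum_comm
    _ = ∑ c, ∑ a, ∑ b, f a b c := Finset.sum_comm
    _ = ∑ c, ∑ b, ∑ a, f a b c := Finset.sum_congr rfl fun c _ => Finset.sum_comm

lemma miUW_full :
    miUW_Z J = ∑ u, ∑ v, ∑ z, ∑ w, J ((u,v,z),w) *
      Real.logb 2 (pUWZ J u w z * pZ J z / (pUZ J u z * pWZ J w z)) := by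
  have h1 : miUW_Z J = ∑ u, ∑ w, ∑ z, pUWZ J u w z *
      Real.logb 2 (pUWZ J u w z * pZ J z / (pUZ J u z * pWZ J w z)) := by
    simp only [miUW_Z, condMI, Fintype.sum_prod_type, pUWZ, pZ, pUZ, pWZ]
  rw [h1]
  refine Finset.sum_congr rfl fun u _ => ?_
  rw [show (∑ w, ∑ z, pUWZ J u w z *
        Real.logb 2 (pUWZ J u w z * pZ J z / (pUZ J u z * pWZ J w z)))
      = ∑ w, ∑ z, ∑ v, J ((u,v,z),w) *
        Real.logb 2 (pUWZ J u w z * pZ J z / (pUZ J u z * pWZ J w z)) from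
    Finset.sum_congr rfl fun w _ => Finset.sum_congr rfl fun z _ => by
      rw [pUWZ, Finset.sum_mul]]
  exact rot3' _

lemma entVWZ_full :
    entV_WZ J = -∑ u, ∑ v, ∑ z, ∑ w, J ((u,v,z),w) *
      Real.logb 2 (pVWZ J v w z / pWZ J w z) := by
  have h1 : entV_WZ J = -∑ v, ∑ w, ∑ z, pVWZ J v w z *
      Real.logb 2 (pVWZ J v w z / pWZ J w z) := by
    simp only [entV_WZ, condEntropy, Fintype.sum_prod_type, pVWZ, pWZ_comm]
  rw [h1, neg_inj]
  calc ∑ v, ∑ w, ∑ z, pVWZ J v w z * Real.logb 2 (pVWZ J v w z / pWZ J w z)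
      = ∑ v, ∑ w, ∑ z, ∑ u, J ((u,v,z),w) * Real.logb 2 (pVWZ J v w z / pWZ J w z) :=
        Finset.sum_congr rfl fun v _ => Finset.sum_congr rfl fun w _ =>
          Finset.sum_congr rfl fun z _ => by rw [pVWZ, Finset.sum_mul]
    _ = ∑ v, ∑ u, ∑ z, ∑ w, J ((u,v,z),w) * Real.logb 2 (pVWZ J v w z / pWZ J w z) :=
        Finset.sum_congr rfl fun v _ => rot3' _
    _ = ∑ u, ∑ v, ∑ z, ∑ w, J ((u,v,z),w) * Real.logb 2 (pVWZ J v w z / pWZ J w z) :=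
        Finset.sum_comm

lemma entVZ_full :
    entV_Z (fun x => ∑ w, J (x,w)) = -∑ u, ∑ v, ∑ z, ∑ w, J ((u,v,z),w) *
      Real.logb 2 (pVZ J v z / pZ J z) := by
  have h1 : entV_Z (fun x => ∑ w, J (x,w)) = -∑ v, ∑ z, pVZ J v z *
      Real.logb 2 (pVZ J v z / pZ J z) := by
    simp only [entV_Z, condEntropy, Fintype.sum_prod_type, pVZ, pZ_comm]
  rw [h1, neg_inj]
  calc ∑ v, ∑ z, pVZ J v z * Real.logb 2 (pVZ J v z / pZ J z)
      = ∑ v, ∑ z, ∑ u, ∑ w, J ((u,v,z),w) * Real.logb 2 (pVZ J v z / pZ J z) :=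
        Finset.sum_congr rfl fun v _ => Finset.sum_congr rfl fun z _ => by
          rw [pVZ, Finset.sum_mul]
          exact Finset.sum_congr rfl fun u _ => by rw [Finset.sum_mul]
    _ = ∑ v, ∑ u, ∑ z, ∑ w, J ((u,v,z),w) * Real.logb 2 (pVZ J v z / pZ J z) :=
        Finset.sum_congr rfl fun v _ => Finset.sum_comm
    _ = ∑ u, ∑ v, ∑ z, ∑ w, J ((u,v,z),w) * Real.logb 2 (pVZ J v z / pZ J z) :=
        Finset.sum_comm

end Rewr

/-- Data processing: `H(V|Z) ≤ H(V|W,Z) + I(U;W|Z)` under the Markov chain. -/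
lemma dpi (J : (Uu × V × Z) × Wt → ℝ) (hJ : IsPMF J) (hM : MarkovZVUW J) :
    entV_Z (fun x => ∑ w, J (x,w)) ≤ entV_WZ J + miUW_Z J := by
  obtain ⟨hp, hs⟩ := hJ
  set q : (Uu × V × Z) × Wt → ℝ := fun x =>
    pUVZ J x.1.1 x.1.2.1 x.1.2.2 * pVWZ J x.1.2.1 x.2 x.1.2.2 / pVZ J x.1.2.1 x.1.2.2
    with hqdef
  -- total mass of q
  have hqsum : ∑ x : (Uu × V × Z) × Wt, q x = ∑ v, ∑ z, pVZ J v z := by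
    rw [Fintype.sum_prod_type]
    simp only [Fintype.sum_prod_type]
    calc ∑ u, ∑ v, ∑ z, ∑ w, q ((u,v,z),w)
        = ∑ u, ∑ v, ∑ z, (pUVZ J u v z * pVZ J v z / pVZ J v z) := by
          refine Finset.sum_congr rfl fun u _ => Finset.sum_congr rfl fun v _ =>
            Finset.sum_congr rfl fun z _ => ?_
          simp only [hqdef]
          rw [← Finset.sum_div, ← Finset.mul_sum, ← pVZ_eq']
      _ = ∑ v, ∑ z, ∑ u, (pUVZ J u v z * pVZ J v z / pVZ J v z) := by
          rw [Finset.sum_comm]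
          exact Finset.sum_congr rfl fun v _ => Finset.sum_comm
      _ = ∑ v, ∑ z, pVZ J v z := by
          refine Finset.sum_congr rfl fun v _ => Finset.sum_congr rfl fun z _ => ?_
          rw [← Finset.sum_div, ← Finset.sum_mul, ← pVZ_eq]
          by_cases h : pVZ J v z = 0
          · simp [h]
          · rw [mul_div_assoc, div_self h, mul_one]
  have hJsum : ∑ v, ∑ z, pVZ J v z = ∑ x : (Uu × V × Z) × Wt, J x := by
    rw [Fintype.sum_prod_type]
    simp only [Fintype.sum_prod_type, pVZ]
    calc ∑ v, ∑ z, ∑ u, ∑ w, J ((u,v,z),w)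
        = ∑ v, ∑ u, ∑ z, ∑ w, J ((u,v,z),w) :=
          Finset.sum_congr rfl fun v _ => Finset.sum_comm
      _ = ∑ u, ∑ v, ∑ z, ∑ w, J ((u,v,z),w) := Finset.sum_comm
  have hgibbs : 0 ≤ ∑ x : (Uu × V × Z) × Wt, J x * Real.logb 2 (J x / q x) := by
    refine gibbs J q hp ?_ ?_ ?_
    · rintro ⟨⟨u,v,z⟩,w⟩
      exact div_nonneg (mul_nonneg (pUVZ_nn J hp _ _ _) (pVWZ_nn J hp _ _ _)) (pVZ_nn J hp _ _)
    · rw [hqsum, hJsum]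
    · rintro ⟨⟨u,v,z⟩,w⟩ hne
      have hx : 0 < J ((u,v,z),w) := lt_of_le_of_ne (hp _) (Ne.symm hne)
      exact ne_of_gt (div_pos (mul_pos (pUVZ_pos J hp hx) (pVWZ_pos J hp hx))
        (pVZ_pos J hp hx))
  -- pointwise identity
  have hptw : ∀ u v z w, J ((u,v,z),w) * Real.logb 2 (J ((u,v,z),w) / q ((u,v,z),w)) =
      J ((u,v,z),w) * Real.logb 2 (pUWZ J u w z * pZ J z / (pUZ J u z * pWZ J w z))
      - J ((u,v,z),w) * Real.logb 2 (pVWZ J v w z / pWZ J w z)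
      + J ((u,v,z),w) * Real.logb 2 (pVZ J v z / pZ J z) := by
    intro u v z w
    by_cases h : J ((u,v,z),w) = 0
    · simp [h]
    have hx : 0 < J ((u,v,z),w) := lt_of_le_of_ne (hp _) (Ne.symm h)
    have hA := pUVZ_pos J hp hx
    have hB := pVWZ_pos J hp hx
    have hC := pVZ_pos J hp hx
    have hD := pUWZ_pos J hp hx
    have hE := pUZ_pos J hp hx
    have hF := pWZ_pos J hp hx
    have hG := pZ_pos J hp hx
    have hkey := markov_key J hp hM hx
    have e1 : Real.logb 2 (J ((u,v,z),w) / q ((u,v,z),w)) =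
        Real.logb 2 (J ((u,v,z),w)) -
          (Real.logb 2 (pUVZ J u v z) + Real.logb 2 (pVWZ J v w z)
            - Real.logb 2 (pVZ J v z)) := by
      simp only [hqdef]
      rw [Real.logb_div h (ne_of_gt (div_pos (mul_pos hA hB) hC)),
        Real.logb_div (ne_of_gt (mul_pos hA hB)) (ne_of_gt hC),
        Real.logb_mul (ne_of_gt hA) (ne_of_gt hB)]
    have e2 : Real.logb 2 (pUWZ J u w z * pZ J z / (pUZ J u z * pWZ J w z)) =
        Real.logb 2 (pUWZ J u w z) + Real.logb 2 (pZ J z)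
          - (Real.logb 2 (pUZ J u z) + Real.logb 2 (pWZ J w z)) := by
      rw [Real.logb_div (ne_of_gt (mul_pos hD hG)) (ne_of_gt (mul_pos hE hF)),
        Real.logb_mul (ne_of_gt hD) (ne_of_gt hG),
        Real.logb_mul (ne_of_gt hE) (ne_of_gt hF)]
    have e3 : Real.logb 2 (pVWZ J v w z / pWZ J w z) =
        Real.logb 2 (pVWZ J v w z) - Real.logb 2 (pWZ J w z) :=
      Real.logb_div (ne_of_gt hB) (ne_of_gt hF)
    have e4 : Real.logb 2 (pVZ J v z / pZ J z) =
        Real.logb 2 (pVZ J v z) - Real.logb 2 (pZ J z) :=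
      Real.logb_div (ne_of_gt hC) (ne_of_gt hG)
    have e5 : Real.logb 2 (J ((u,v,z),w)) + Real.logb 2 (pUZ J u z) =
        Real.logb 2 (pUWZ J u w z) + Real.logb 2 (pUVZ J u v z) := by
      rw [← Real.logb_mul h (ne_of_gt hE), ← Real.logb_mul (ne_of_gt hD) (ne_of_gt hA), hkey]
    rw [e1, e2, e3, e4]
    nlinarith [e5]
  -- combine
  have hid : ∑ x : (Uu × V × Z) × Wt, J x * Real.logb 2 (J x / q x) =
      miUW_Z J + entV_WZ J - entV_Z (fun x => ∑ w, J (x,w)) := by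
    rw [Fintype.sum_prod_type]
    simp only [Fintype.sum_prod_type]
    calc ∑ u, ∑ v, ∑ z, ∑ w, J ((u,v,z),w) * Real.logb 2 (J ((u,v,z),w) / q ((u,v,z),w))
        = ∑ u, ∑ v, ∑ z, ∑ w,
            (J ((u,v,z),w) * Real.logb 2 (pUWZ J u w z * pZ J z / (pUZ J u z * pWZ J w z))
            - J ((u,v,z),w) * Real.logb 2 (pVWZ J v w z / pWZ J w z)
            + J ((u,v,z),w) * Real.logb 2 (pVZ J v z / pZ J z)) := by
          exact Finset.sum_congr rfl fun u _ => Finset.sum_congr rfl fun v _ =>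
            Finset.sum_congr rfl fun z _ => Finset.sum_congr rfl fun w _ => hptw u v z w
      _ = miUW_Z J + entV_WZ J - entV_Z (fun x => ∑ w, J (x,w)) := by
          simp only [Finset.sum_add_distrib, Finset.sum_sub_distrib]
          rw [miUW_full, entVWZ_full, entVZ_full]
          ring
  linarith [hgibbs, hid.symm ▸ hgibbs, hid ▸ hgibbs]


section Mix
variable (J : (Uu × V × Z) × Wt → ℝ) (l : ℝ)

lemma markov_iff : MarkovZVUW J ↔
    ∀ u v z w, J ((u,v,z),w) * pU J u = pUVZ J u v z * pUW J u w := by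
  constructor
  · exact fun h u v z w => markov_ptw J h u v z w
  · intro h a b c
    have := h b a.2 a.1 c
    simpa [Fintype.sum_prod_type, pU, pUVZ, pUW] using this

/-- Time sharing between `W` and a constant. -/
def mix : (Uu × V × Z) × Option Wt → ℝ :=
  fun x => match x.2 with
  | none => (1 - l) * ∑ w, J (x.1, w)
  | some w => l * J (x.1, w)

lemma mix_some (x w) : mix J l (x, some w) = l * J (x, w) := rfl
lemma mix_none (x) : mix J l (x, none) = (1 - l) * ∑ w, J (x, w) := rfl

lemma mix_sum (x) : ∑ o, mix J l (x, o) = ∑ w, J (x, w) := by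
  rw [Fintype.sum_option, mix_none,
    show (∑ w, mix J l (x, some w)) = l * ∑ w, J (x, w) from by
      rw [Finset.mul_sum]; rfl]
  ring

lemma mix_pUWZ_some (u w z) : pUWZ (mix J l) u (some w) z = l * pUWZ J u w z := by
  rw [pUWZ, pUWZ, Finset.mul_sum]; rfl

lemma mix_pUWZ_none (u z) : pUWZ (mix J l) u none z = (1 - l) * pUZ J u z := by
  rw [pUWZ, pUZ_eq', Finset.mul_sum]; rfl

lemma mix_pUZ (u z) : pUZ (mix J l) u z = pUZ J u z := by
  rw [pUZ_eq, Fintype.sum_option, mix_pUWZ_none,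
    Finset.sum_congr rfl (fun w _ => mix_pUWZ_some J l u w z),
    ← Finset.mul_sum, ← pUZ_eq]
  ring

lemma mix_pWZ_some (w z) : pWZ (mix J l) (some w) z = l * pWZ J w z := by
  rw [pWZ_eq, pWZ_eq, Finset.mul_sum]
  exact Finset.sum_congr rfl fun u _ => mix_pUWZ_some J l u w z

lemma mix_pWZ_none (z) : pWZ (mix J l) none z = (1 - l) * pZ J z := by
  rw [pWZ_eq, pZ_eq, Finset.mul_sum]
  exact Finset.sum_congr rfl fun u _ => mix_pUWZ_none J l u z

lemma mix_pZ (z) : pZ (mix J l) z = pZ J z := by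
  rw [pZ_eq, pZ_eq]
  exact Finset.sum_congr rfl fun u _ => mix_pUZ J l u z

lemma mix_pVWZ_some (v w z) : pVWZ (mix J l) v (some w) z = l * pVWZ J v w z := by
  rw [pVWZ, pVWZ, Finset.mul_sum]; rfl

lemma mix_pVWZ_none (v z) : pVWZ (mix J l) v none z = (1 - l) * pVZ J v z := by
  rw [pVWZ, pVZ_eq, Finset.mul_sum]; rfl

lemma mix_pUVZ (u v z) : pUVZ (mix J l) u v z = pUVZ J u v z := mix_sum J l _

lemma mix_pU (u) : pU (mix J l) u = pU J u := by
  rw [pU, pU]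
  exact Finset.sum_congr rfl fun z _ => Finset.sum_congr rfl fun v _ => mix_sum J l _

lemma mix_pUW_some (u w) : pUW (mix J l) u (some w) = l * pUW J u w := by
  rw [pUW, pUW, Finset.mul_sum]
  exact Finset.sum_congr rfl fun z _ => by rw [Finset.mul_sum]; rfl

lemma mix_pUW_none (u) : pUW (mix J l) u none = (1 - l) * pU J u := by
  rw [pUW, pU, Finset.mul_sum]
  exact Finset.sum_congr rfl fun z _ => by rw [Finset.mul_sum]; rfl

lemma mix_isPMF (hJ : IsPMF J) (hl0 : 0 ≤ l) (hl1 : l < 1) : IsPMF (mix J l) := by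
  obtain ⟨hp, hs⟩ := hJ
  constructor
  · rintro ⟨x, o⟩
    cases o with
    | none => exact mul_nonneg (by linarith) (Finset.sum_nonneg fun _ _ => hp _)
    | some w => exact mul_nonneg hl0 (hp _)
  · rw [Fintype.sum_prod_type]
    rw [Finset.sum_congr rfl (fun x _ => mix_sum J l x)]
    rw [← Fintype.sum_prod_type]
    exact hs

lemma mix_markov (hM : MarkovZVUW J) : MarkovZVUW (mix J l) := by
  rw [markov_iff]
  intro u v z o
  have hptw := markov_ptw J hM u v z
  cases o with
  | none =>
    rw [mix_pU, mix_pUVZ, mix_pUW_none, mix_none,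
      show (∑ w, J ((u,v,z),w)) = pUVZ J u v z from rfl]
    ring
  | some w =>
    rw [mix_pU, mix_pUVZ, mix_pUW_some, mix_some]
    linear_combination l * hptw w

lemma pUZ_zero_pUVZ (hp : ∀ x, 0 ≤ J x) {u z} (h : pUZ J u z = 0) (v) :
    pUVZ J u v z = 0 := by
  have h1 : pUVZ J u v z ≤ pUZ J u z := by
    rw [pUZ_eq']
    exact Finset.single_le_sum (f := fun v' => pUVZ J u v' z)
      (fun i _ => pUVZ_nn J hp _ _ _) (Finset.mem_univ v)
  exact le_antisymm (h ▸ h1) (pUVZ_nn J hp _ _ _)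

lemma pZ_zero_pUZ (hp : ∀ x, 0 ≤ J x) {z} (h : pZ J z = 0) (u) : pUZ J u z = 0 := by
  have h1 : pUZ J u z ≤ pZ J z := by
    rw [pZ_eq]
    exact Finset.single_le_sum (f := fun u' => pUZ J u' z)
      (fun i _ => pUZ_nn J hp _ _) (Finset.mem_univ u)
  exact le_antisymm (h ▸ h1) (pUZ_nn J hp _ _)

lemma mix_miUW (hp : ∀ x, 0 ≤ J x) (hl1 : l < 1) :
    miUW_Z (mix J l) = l * miUW_Z J := by
  rw [miUW_full, miUW_full, Finset.mul_sum]
  refine Finset.sum_congr rfl fun u _ => ?_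
  rw [Finset.mul_sum]
  refine Finset.sum_congr rfl fun v _ => ?_
  rw [Finset.mul_sum]
  refine Finset.sum_congr rfl fun z _ => ?_
  rw [Fintype.sum_option]
  have hnone : mix J l ((u,v,z), none) *
      Real.logb 2 (pUWZ (mix J l) u none z * pZ (mix J l) z /
        (pUZ (mix J l) u z * pWZ (mix J l) none z)) = 0 := by
    rw [mix_pUWZ_none, mix_pZ, mix_pUZ, mix_pWZ_none, mix_none]
    by_cases h : pUZ J u z = 0
    · rw [show (∑ w, J ((u,v,z),w)) = pUVZ J u v z from rfl,
        pUZ_zero_pUVZ J hp h v]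
      ring
    · by_cases h2 : pZ J z = 0
      · exact absurd (pZ_zero_pUZ J hp h2 u) h
      have hne : (1:ℝ) - l ≠ 0 := ne_of_gt (by linarith)
      have harg : (1 - l) * pUZ J u z * pZ J z / (pUZ J u z * ((1 - l) * pZ J z)) = 1 := by
        field_simp
      rw [harg, Real.logb_one, mul_zero]
  rw [hnone, zero_add, Finset.mul_sum]
  refine Finset.sum_congr rfl fun w _ => ?_
  rw [mix_pUWZ_some, mix_pZ, mix_pUZ, mix_pWZ_some, mix_some]
  by_cases hl0 : l = 0
  · simp [hl0]
  · rw [show l * pUWZ J u w z * pZ J z / (pUZ J u z * (l * pWZ J w z)) =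
        pUWZ J u w z * pZ J z / (pUZ J u z * pWZ J w z) from by
      rw [mul_assoc l, mul_left_comm (pUZ J u z) l, mul_div_mul_left _ _ hl0]]
    ring

lemma mix_entVWZ (hl1 : l < 1) :
    entV_WZ (mix J l) = l * entV_WZ J + (1 - l) * entV_Z (fun x => ∑ w, J (x,w)) := by
  rw [entVWZ_full, entVWZ_full, entVZ_full]
  have key : ∀ u v z, (∑ o, mix J l ((u,v,z), o) *
      Real.logb 2 (pVWZ (mix J l) v o z / pWZ (mix J l) o z))
      = l * (∑ w, J ((u,v,z),w) * Real.logb 2 (pVWZ J v w z / pWZ J w z))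
        + (1 - l) * (∑ w, J ((u,v,z),w) * Real.logb 2 (pVZ J v z / pZ J z)) := by
    intro u v z
    rw [Fintype.sum_option]
    have hne : (1:ℝ) - l ≠ 0 := ne_of_gt (by linarith)
    have hnone : mix J l ((u,v,z), none) *
        Real.logb 2 (pVWZ (mix J l) v none z / pWZ (mix J l) none z)
        = (1 - l) * (pUVZ J u v z * Real.logb 2 (pVZ J v z / pZ J z)) := by
      rw [mix_pVWZ_none, mix_pWZ_none, mix_none, mul_div_mul_left _ _ hne,
        show (∑ w, J ((u,v,z),w)) = pUVZ J u v z from rfl]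
      ring
    have hsome : ∀ w, mix J l ((u,v,z), some w) *
        Real.logb 2 (pVWZ (mix J l) v (some w) z / pWZ (mix J l) (some w) z)
        = l * (J ((u,v,z),w) * Real.logb 2 (pVWZ J v w z / pWZ J w z)) := by
      intro w
      rw [mix_pVWZ_some, mix_pWZ_some, mix_some]
      by_cases hl0 : l = 0
      · simp [hl0]
      · rw [mul_div_mul_left _ _ hl0]; ring
    rw [hnone, Finset.sum_congr rfl (fun w _ => hsome w), ← Finset.mul_sum,
      show (∑ w, J ((u,v,z),w) * Real.logb 2 (pVZ J v z / pZ J z)) =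
        pUVZ J u v z * Real.logb 2 (pVZ J v z / pZ J z) from by
      rw [pUVZ, Finset.sum_mul]]
    ring
  rw [show (∑ u, ∑ v, ∑ z, ∑ o, mix J l ((u,v,z), o) *
      Real.logb 2 (pVWZ (mix J l) v o z / pWZ (mix J l) o z))
      = ∑ u, ∑ v, ∑ z, (l * (∑ w, J ((u,v,z),w) *
          Real.logb 2 (pVWZ J v w z / pWZ J w z))
        + (1 - l) * (∑ w, J ((u,v,z),w) * Real.logb 2 (pVZ J v z / pZ J z))) from
    Finset.sum_congr rfl fun u _ => Finset.sum_congr rfl fun v _ =>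
      Finset.sum_congr rfl fun z _ => key u v z]
  simp only [Finset.sum_add_distrib, ← Finset.mul_sum]
  ring

end Mix

section Relabel
variable {Wt2 : Type} [Fintype Wt2] (e : Wt ≃ Wt2) (K : (Uu × V × Z) × Wt → ℝ)

lemma relabel_sum (x) : ∑ w2 : Wt2, K (x, e.symm w2) = ∑ w, K (x, w) :=
  Equiv.sum_comp e.symm (fun w => K (x, w))

lemma relabel_isPMF (h : IsPMF K) :
    IsPMF (fun y : (Uu × V × Z) × Wt2 => K (y.1, e.symm y.2)) := by
  obtain ⟨hp, hs⟩ := h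
  refine ⟨fun y => hp _, ?_⟩
  rw [Fintype.sum_prod_type]
  rw [Finset.sum_congr rfl (fun x _ => relabel_sum e K x)]
  rw [← Fintype.sum_prod_type]
  exact hs

lemma relabel_pUZ (u z) : pUZ (fun y => K (y.1, e.symm y.2)) u z = pUZ K u z := by
  rw [pUZ_eq, pUZ_eq]
  exact Equiv.sum_comp e.symm (fun w => pUWZ K u w z)

lemma relabel_pZ (z) : pZ (fun y => K (y.1, e.symm y.2)) z = pZ K z := by
  rw [pZ_eq, pZ_eq]
  exact Finset.sum_congr rfl fun u _ => relabel_pUZ e K u z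

lemma relabel_pUVZ (u v z) : pUVZ (fun y => K (y.1, e.symm y.2)) u v z = pUVZ K u v z :=
  relabel_sum e K _

lemma relabel_pU (u) : pU (fun y => K (y.1, e.symm y.2)) u = pU K u := by
  rw [pU, pU]
  exact Finset.sum_congr rfl fun z _ => Finset.sum_congr rfl fun v _ => relabel_sum e K _

lemma relabel_markov (h : MarkovZVUW K) : MarkovZVUW (fun y => K (y.1, e.symm y.2)) := by
  rw [markov_iff]
  intro u v z w2
  rw [relabel_pU, relabel_pUVZ]
  exact markov_ptw K h u v z (e.symm w2)

lemma relabel_miUW : miUW_Z (fun y => K (y.1, e.symm y.2)) = miUW_Z K := by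
  rw [miUW_full, miUW_full]
  refine Finset.sum_congr rfl fun u _ => Finset.sum_congr rfl fun v _ =>
    Finset.sum_congr rfl fun z _ => ?_
  rw [Finset.sum_congr rfl (fun w2 (_ : w2 ∈ Finset.univ) => by
    rw [relabel_pZ, relabel_pUZ]; exact rfl :
    ∀ w2 ∈ Finset.univ, (fun y => K (y.1, e.symm y.2)) ((u,v,z), w2) *
      Real.logb 2 (pUWZ (fun y => K (y.1, e.symm y.2)) u w2 z *
        pZ (fun y => K (y.1, e.symm y.2)) z /
        (pUZ (fun y => K (y.1, e.symm y.2)) u z *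
          pWZ (fun y => K (y.1, e.symm y.2)) w2 z)) =
      K ((u,v,z), e.symm w2) * Real.logb 2 (pUWZ K u (e.symm w2) z * pZ K z /
        (pUZ K u z * pWZ K (e.symm w2) z)))]
  exact Equiv.sum_comp e.symm (fun w => K ((u,v,z), w) *
    Real.logb 2 (pUWZ K u w z * pZ K z / (pUZ K u z * pWZ K w z)))

lemma relabel_entVWZ : entV_WZ (fun y => K (y.1, e.symm y.2)) = entV_WZ K := by
  rw [entVWZ_full, entVWZ_full, neg_inj]
  refine Finset.sum_congr rfl fun u _ => Finset.sum_congr rfl fun v _ =>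
    Finset.sum_congr rfl fun z _ => ?_
  rw [Finset.sum_congr rfl (fun w2 (_ : w2 ∈ Finset.univ) => rfl :
    ∀ w2 ∈ Finset.univ, (fun y => K (y.1, e.symm y.2)) ((u,v,z), w2) *
      Real.logb 2 (pVWZ (fun y => K (y.1, e.symm y.2)) v w2 z /
        pWZ (fun y => K (y.1, e.symm y.2)) w2 z) =
      K ((u,v,z), e.symm w2) *
        Real.logb 2 (pVWZ K v (e.symm w2) z / pWZ K (e.symm w2) z))]
  exact Equiv.sum_comp e.symm (fun w => K ((u,v,z), w) *
    Real.logb 2 (pVWZ K v w z / pWZ K w z))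

end Relabel

end S15

/-- If `(Z,V) − U − W` is a Markov chain and `c ≥ 0` satisfies
`I(U;W|Z) > c`, then there is a finite `W̄` (with the same `(U,V,Z)`-marginal) such that
`(Z,V) − U − W̄` is a Markov chain, `I(U;W̄|Z) = c` and
`H(V|W̄,Z) ≤ H(V|W,Z) + I(U;W|Z) − c`. -/
theorem statement_15 {Uu V Z Wt : Type}
    [Fintype Uu] [Fintype V] [Fintype Z] [Fintype Wt]
    (J : (Uu × V × Z) × Wt → ℝ) (hJ : IsPMF J) (hM : MarkovZVUW J)
    (c : ℝ) (hc : 0 ≤ c) (hgt : c < miUW_Z J) :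
    ∃ (nw : ℕ) (J' : (Uu × V × Z) × Fin nw → ℝ),
      IsPMF J' ∧ (∀ x, (∑ w, J' (x, w)) = ∑ w, J (x, w)) ∧ MarkovZVUW J' ∧
      miUW_Z J' = c ∧ entV_WZ J' ≤ entV_WZ J + miUW_Z J - c := by
  classical
  obtain ⟨hp, hs⟩ := hJ
  have hI : 0 < miUW_Z J := lt_of_le_of_lt hc hgt
  set l : ℝ := c / miUW_Z J with hl
  have hl0 : 0 ≤ l := div_nonneg hc (le_of_lt hI)
  have hl1 : l < 1 := (div_lt_one hI).mpr hgt
  have hc' : l * miUW_Z J = c := div_mul_cancel₀ c (ne_of_gt hI)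
  refine ⟨Fintype.card (Option Wt),
    (fun y => S15.mix J l (y.1, (Fintype.equivFin (Option Wt)).symm y.2)),
    ?_, ?_, ?_, ?_, ?_⟩
  · exact S15.relabel_isPMF _ _ (S15.mix_isPMF J l ⟨hp, hs⟩ hl0 hl1)
  · intro x
    exact (S15.relabel_sum (Fintype.equivFin (Option Wt)) (S15.mix J l) x).trans
      (S15.mix_sum J l x)
  · exact S15.relabel_markov _ _ (S15.mix_markov J l hM)
  · rw [S15.relabel_miUW, S15.mix_miUW J l hp hl1]
    exact hc'
  · rw [S15.relabel_entVWZ, S15.mix_entVWZ J l hl1]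
    have hdpi := S15.dpi J ⟨hp, hs⟩ hM
    have h2 : (1 - l) * entV_Z (fun x => ∑ w, J (x,w)) ≤
        (1 - l) * (entV_WZ J + miUW_Z J) :=
      mul_le_mul_of_nonneg_left hdpi (by linarith)
    have h3 : l * entV_WZ J + (1 - l) * (entV_WZ J + miUW_Z J) =
        entV_WZ J + miUW_Z J - c := by
      rw [← hc']; ring
    linarith
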